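/- For θ > 0 and c0 > c1 > 0, one has J″(s_b) > 0 and J″(s_a) < 0. Consequently, if in addition J(s_a) = a and J(s_b) = b, then J(s) = b + (J″(s_b)/2)(s − s_b)² + O((s − s_b)³) as s → s_b, and J(s) = a + (J″(s_a)/2)(s − s_a)² + O((s − s_a)³) as s → s_a. -/

import Mathlib

open Asymptotics

/-- The map `J(s; c0, c1) = (c1*s + c0) * ((s+1)/s)^(1/θ)` for real `s`,
using the real power of the positive quantity `(s+1)/s`. -/
noncomputable def Jmap (θ c0 c1 s : ℝ) : ℝ :=
  (c1 * s + c0) * ((s + 1) / s) ^ (1 / θ)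

/-- `s_a = (1−θ)/(2θ) − (1/(2θ))·√(4θ·(c0/c1) + (1−θ)²)`. -/
noncomputable def sA (θ r : ℝ) : ℝ :=
  (1 - θ) / (2 * θ) - 1 / (2 * θ) * Real.sqrt (4 * θ * r + (1 - θ) ^ 2)

/-- `s_b = (1−θ)/(2θ) + (1/(2θ))·√(4θ·(c0/c1) + (1−θ)²)`. -/
noncomputable def sB (θ r : ℝ) : ℝ :=
  (1 - θ) / (2 * θ) + 1 / (2 * θ) * Real.sqrt (4 * θ * r + (1 - θ) ^ 2)

/-- For `θ > 0` and `c0 > c1 > 0`: `J″(s_b) > 0` and `J″(s_a) < 0`; moreover, if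
`J(s_a) = a` and `J(s_b) = b`, then `J(s) = b + (J″(s_b)/2)(s − s_b)² + O((s − s_b)³)`
as `s → s_b` and `J(s) = a + (J″(s_a)/2)(s − s_a)² + O((s − s_a)³)` as `s → s_a`. -/
lemma aux_ne (s : ℝ) (hs : 0 < s * (s + 1)) : s ≠ 0 ∧ s + 1 ≠ 0 := by
  constructor <;> rintro h <;> rw [h] at hs <;> simp at hs

lemma aux_pos (s : ℝ) (hs : 0 < s * (s + 1)) : 0 < (s + 1) / s := by
  obtain ⟨h0, h1⟩ := aux_ne s hs
  have h2 : (s + 1) / s = (s * (s + 1)) / s ^ 2 := by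
    field_simp
  rw [h2]
  exact div_pos hs (by positivity)

lemma hasDerivAt_Jmap (θ c0 c1 s : ℝ) (hθ : 0 < θ) (hs : 0 < s * (s + 1)) :
    HasDerivAt (Jmap θ c0 c1)
      (((s + 1) / s) ^ (1 / θ) * (c1 - (c1 * s + c0) / (θ * (s * (s + 1))))) s := by
  obtain ⟨h0, h1⟩ := aux_ne s hs
  have hup := aux_pos s hs
  have hu : HasDerivAt (fun x : ℝ => (x + 1) / x) ((1 * s - (s + 1) * 1) / s ^ 2) s :=
    ((hasDerivAt_id s).add_const 1).div (hasDerivAt_id s) h0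
  have hA := hu.rpow_const (p := 1 / θ) (Or.inl hup.ne')
  have hlin : HasDerivAt (fun x : ℝ => c1 * x + c0) (c1 * 1) s :=
    ((hasDerivAt_id s).const_mul c1).add_const c0
  have := hlin.mul hA
  refine HasDerivAt.congr_deriv (f := Jmap θ c0 c1) this ?_
  rw [Real.rpow_sub hup, Real.rpow_one]
  field_simp
  ring

lemma deriv_Jmap_eq (θ c0 c1 s : ℝ) (hθ : 0 < θ) (hs : 0 < s * (s + 1)) :
    deriv (Jmap θ c0 c1) =ᶠ[nhds s]
      fun x => ((x + 1) / x) ^ (1 / θ) * (c1 - (c1 * x + c0) / (θ * (x * (x + 1)))) := by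
  have hopen : IsOpen {x : ℝ | 0 < x * (x + 1)} :=
    isOpen_lt continuous_const (by continuity)
  filter_upwards [hopen.mem_nhds hs] with x hx
  exact (hasDerivAt_Jmap θ c0 c1 x hθ hx).deriv

lemma deriv2_Jmap (θ c0 c1 s : ℝ) (hθ : 0 < θ) (hs : 0 < s * (s + 1))
    (hcrit : c1 * s + c0 = c1 * θ * (s * (s + 1))) :
    deriv (deriv (Jmap θ c0 c1)) s =
      ((s + 1) / s) ^ (1 / θ) * (c1 * (2 * θ * s + θ - 1) / (θ * (s * (s + 1)))) := by
  obtain ⟨h0, h1⟩ := aux_ne s hs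
  have hup := aux_pos s hs
  have hθ' : θ ≠ 0 := hθ.ne'
  have hden : θ * (s * (s + 1)) ≠ 0 := by positivity
  rw [(deriv_Jmap_eq θ c0 c1 s hθ hs).deriv_eq]
  -- derivative of the product A * P
  have hu : HasDerivAt (fun x : ℝ => (x + 1) / x) ((1 * s - (s + 1) * 1) / s ^ 2) s :=
    ((hasDerivAt_id s).add_const 1).div (hasDerivAt_id s) h0
  have hA := hu.rpow_const (p := 1 / θ) (Or.inl hup.ne')
  have hD : HasDerivAt (fun x : ℝ => θ * (x * (x + 1))) (θ * (1 * (s + 1) + s * 1)) s := by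
    exact (((hasDerivAt_id s).mul ((hasDerivAt_id s).add_const 1)).const_mul θ)
  have hN : HasDerivAt (fun x : ℝ => c1 * x + c0) (c1 * 1) s :=
    ((hasDerivAt_id s).const_mul c1).add_const c0
  have hP : HasDerivAt (fun x : ℝ => c1 - (c1 * x + c0) / (θ * (x * (x + 1))))
      (-((c1 * 1 * (θ * (s * (s + 1))) - (c1 * s + c0) * (θ * (1 * (s + 1) + s * 1))) /
        (θ * (s * (s + 1))) ^ 2)) s :=
    (hN.div hD hden).const_sub c1
  have hF := hA.mul hP
  rw [(show HasDerivAt (fun x => ((x + 1) / x) ^ (1 / θ) * (c1 - (c1 * x + c0) / (θ * (x * (x + 1))))) _ s from hF).deriv]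
  have hP0 : c1 - (c1 * s + c0) / (θ * (s * (s + 1))) = 0 := by
    rw [hcrit]; field_simp; ring
  rw [hP0, mul_zero, zero_add, hcrit]
  field_simp
  ring

lemma taylor2 {f : ℝ → ℝ} {x : ℝ} (hf : AnalyticAt ℝ f x) (h1 : deriv f x = 0) :
    (fun s => f s - f x - deriv (deriv f) x / 2 * (s - x) ^ 2)
      =O[nhds x] fun s => (s - x) ^ 3 := by
  obtain ⟨p, hp⟩ := hf
  obtain ⟨r, hpr⟩ := id hp
  have hc0 : p.coeff 0 = f x := hp.coeff_zero 1
  have hc1 : p.coeff 1 = deriv f x := by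
    have := hp.deriv
    simp only [FormalMultilinearSeries.coeff]
    rw [this]
    rfl
  have hc2 : p.coeff 2 = deriv (deriv f) x / 2 := by
    have h := hpr.factorial_smul (y := (1:ℝ)) 2
    have h2 : iteratedFDeriv ℝ 2 f x (fun _ => (1:ℝ)) = deriv (deriv f) x := by
      rw [← iteratedDeriv_eq_iteratedFDeriv]
      rw [iteratedDeriv_succ, iteratedDeriv_one]
    rw [h2] at h
    have h3 : (Nat.factorial 2 : ℕ) • p.coeff 2 = deriv (deriv f) x := h
    rw [nsmul_eq_mul] at h3
    norm_num [Nat.factorial] at h3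
    field_simp
    linarith [h3]
  have hO := hp.isBigO_sub_partialSum_pow 3
  have hps : ∀ y : ℝ, p.partialSum 3 y = f x + deriv (deriv f) x / 2 * y ^ 2 := by
    intro y
    simp only [FormalMultilinearSeries.partialSum, Finset.sum_range_succ,
      Finset.sum_range_zero, FormalMultilinearSeries.apply_eq_pow_smul_coeff]
    rw [hc0, hc1, hc2, h1]
    simp
    ring
  have ht : Filter.Tendsto (fun s : ℝ => s - x) (nhds x) (nhds 0) := by
    simpa using ((continuous_sub_right x).tendsto x)
  have hO2 := hO.comp_tendsto ht
  have hO3 : (fun s => f s - f x - deriv (deriv f) x / 2 * (s - x) ^ 2)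
      =O[nhds x] fun s => ‖s - x‖ ^ 3 := by
    refine hO2.congr' ?_ ?_
    · filter_upwards with s
      simp only [Function.comp]
      rw [hps]
      ring_nf
    · filter_upwards with s
      rfl
  refine hO3.trans (isBigO_of_le _ fun s => ?_)
  simp [abs_pow]

lemma analyticAt_Jmap (θ c0 c1 s : ℝ) (hθ : 0 < θ) (hs : 0 < s * (s + 1)) :
    AnalyticAt ℝ (Jmap θ c0 c1) s := by
  obtain ⟨h0, h1⟩ := aux_ne s hs
  have hup := aux_pos s hs
  have hu : AnalyticAt ℝ (fun x : ℝ => (x + 1) / x) s :=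
    ((analyticAt_id.add analyticAt_const).div analyticAt_id h0)
  have huC : AnalyticAt ℝ (fun x : ℝ => (((x + 1) / x : ℝ) : ℂ)) s :=
    (Complex.ofRealCLM.analyticAt _).comp hu
  have hcpow : AnalyticAt ℂ (fun z : ℂ => z ^ (1 / θ : ℂ)) (((s + 1) / s : ℝ) : ℂ) :=
    analyticAt_id.cpow analyticAt_const (Complex.ofReal_mem_slitPlane.2 hup)
  have hcomp := AnalyticAt.comp (f := fun x : ℝ => (((x + 1) / x : ℝ) : ℂ)) (x := s)
    (hcpow.restrictScalars (𝕜 := ℝ)) huC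
  have hre := (Complex.reCLM.analyticAt _).comp hcomp
  have hlin : AnalyticAt ℝ (fun x : ℝ => c1 * x + c0) s :=
    ((analyticAt_const.mul analyticAt_id).add analyticAt_const)
  have hmul := hlin.mul hre
  apply hmul.congr
  have hopen : IsOpen {x : ℝ | 0 < x * (x + 1)} :=
    isOpen_lt continuous_const (by continuity)
  filter_upwards [hopen.mem_nhds hs] with x hx
  have hx0 := aux_pos x hx
  simp only [Pi.mul_apply, Function.comp, Jmap, Complex.reCLM_apply]
  congr 1
  rw [show ((1 : ℂ) / (θ : ℂ)) = ((1 / θ : ℝ) : ℂ) by push_cast; ring,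
    ← Complex.ofReal_cpow hx0.le, Complex.ofReal_re]

theorem stmt3 (θ c0 c1 a b : ℝ) (hθ : 0 < θ) (hc1 : 0 < c1) (hc01 : c1 < c0) :
    0 < deriv (deriv (Jmap θ c0 c1)) (sB θ (c0 / c1)) ∧
    deriv (deriv (Jmap θ c0 c1)) (sA θ (c0 / c1)) < 0 ∧
    (Jmap θ c0 c1 (sA θ (c0 / c1)) = a → Jmap θ c0 c1 (sB θ (c0 / c1)) = b →
      ((fun s => Jmap θ c0 c1 s - b -
          deriv (deriv (Jmap θ c0 c1)) (sB θ (c0 / c1)) / 2 * (s - sB θ (c0 / c1)) ^ 2)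
        =O[nhds (sB θ (c0 / c1))] fun s => (s - sB θ (c0 / c1)) ^ 3) ∧
      ((fun s => Jmap θ c0 c1 s - a -
          deriv (deriv (Jmap θ c0 c1)) (sA θ (c0 / c1)) / 2 * (s - sA θ (c0 / c1)) ^ 2)
        =O[nhds (sA θ (c0 / c1))] fun s => (s - sA θ (c0 / c1)) ^ 3)) := by
  have hc0 : 0 < c0 := hc1.trans hc01
  set r : ℝ := c0 / c1 with hrdef
  have hr : 1 < r := (one_lt_div hc1).2 hc01
  have hr0 : 0 < r := lt_trans one_pos hr
  have hc1r : c1 * r = c0 := by rw [hrdef]; field_simp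
  set D : ℝ := Real.sqrt (4 * θ * r + (1 - θ) ^ 2) with hDdef
  have harg : 0 < 4 * θ * r + (1 - θ) ^ 2 := by positivity
  have hD2 : D ^ 2 = 4 * θ * r + (1 - θ) ^ 2 := Real.sq_sqrt harg.le
  have hD : 0 < D := Real.sqrt_pos.2 harg
  have hsBeq : sB θ r = ((1 - θ) + D) / (2 * θ) := by rw [sB]; ring
  have hsAeq : sA θ r = ((1 - θ) - D) / (2 * θ) := by rw [sA]; ring
  have h1 : 0 < (1 - θ) + D := by nlinarith [mul_pos hθ hr0]
  have h2 : 1 + θ < D := by nlinarith [mul_pos hθ (sub_pos.2 hr)]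
  have hsB : 0 < sB θ r := by rw [hsBeq]; positivity
  have hsA : sA θ r < -1 := by
    rw [hsAeq, div_lt_iff₀ (by positivity)]
    linarith
  have hqB : θ * (sB θ r) ^ 2 + (θ - 1) * (sB θ r) - r = 0 := by
    rw [hsBeq]; field_simp; nlinarith [hD2]
  have hqA : θ * (sA θ r) ^ 2 + (θ - 1) * (sA θ r) - r = 0 := by
    rw [hsAeq]; field_simp; nlinarith [hD2]
  have hUB : 0 < sB θ r * (sB θ r + 1) := by nlinarith
  have hUA : 0 < sA θ r * (sA θ r + 1) :=
    mul_pos_of_neg_of_neg (by linarith) (by linarith)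
  have hcritB : c1 * sB θ r + c0 = c1 * θ * (sB θ r * (sB θ r + 1)) := by
    linear_combination (-c1) * hqB - hc1r
  have hcritA : c1 * sA θ r + c0 = c1 * θ * (sA θ r * (sA θ r + 1)) := by
    linear_combination (-c1) * hqA - hc1r
  have hderB := deriv2_Jmap θ c0 c1 _ hθ hUB hcritB
  have hderA := deriv2_Jmap θ c0 c1 _ hθ hUA hcritA
  have h2B : 2 * θ * sB θ r + θ - 1 = D := by rw [hsBeq]; field_simp; ring
  have h2A : 2 * θ * sA θ r + θ - 1 = -D := by rw [hsAeq]; field_simp; ring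
  have hApowB : 0 < ((sB θ r + 1) / sB θ r) ^ (1 / θ) :=
    Real.rpow_pos_of_pos (aux_pos _ hUB) _
  have hApowA : 0 < ((sA θ r + 1) / sA θ r) ^ (1 / θ) :=
    Real.rpow_pos_of_pos (aux_pos _ hUA) _
  have hpos : 0 < deriv (deriv (Jmap θ c0 c1)) (sB θ r) := by
    rw [hderB, h2B]
    exact mul_pos hApowB (div_pos (mul_pos hc1 hD) (mul_pos hθ hUB))
  have hneg : deriv (deriv (Jmap θ c0 c1)) (sA θ r) < 0 := by
    rw [hderA, h2A]
    exact mul_neg_of_pos_of_neg hApowA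
      (div_neg_of_neg_of_pos (mul_neg_of_pos_of_neg hc1 (by linarith)) (mul_pos hθ hUA))
  refine ⟨hpos, hneg, fun ha hb => ?_⟩
  have hderivB0 : deriv (Jmap θ c0 c1) (sB θ r) = 0 := by
    rw [(hasDerivAt_Jmap θ c0 c1 _ hθ hUB).deriv, hcritB]
    field_simp
    ring
  have hderivA0 : deriv (Jmap θ c0 c1) (sA θ r) = 0 := by
    rw [(hasDerivAt_Jmap θ c0 c1 _ hθ hUA).deriv, hcritA]
    field_simp [(aux_ne _ hUA).1, (aux_ne _ hUA).2]
    ring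
  constructor
  · have := taylor2 (analyticAt_Jmap θ c0 c1 _ hθ hUB) hderivB0
    rwa [hb] at this
  · have := taylor2 (analyticAt_Jmap θ c0 c1 _ hθ hUA) hderivA0
    rwa [ha] at this
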